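/- Let X = {X_Q} be a family of normalized quasi-Banach function spaces. Suppose there is a constant C such that for every cube Q and every function f with ‖f‖_{exp L(Q)} ≤ 1 one has ‖f‖_{X_Q} ≤ C. Then for every cube Q, every γ ∈ (0,1), and every nested sequence of measurable sets Ω_k ⊂ Q with |Ω_k| ≤ γ^k|Q|, one has ‖Σ_{k=0}^∞ χ_{Ω_k}‖_{X_Q} ≤ C·C'_γ, where C'_γ depends only on γ. -/

import Mathlib

open MeasureTheory Set ENNReal

noncomputable section

def IsCube {n : ℕ} (Q : Set (Fin n → ℝ)) : Prop :=
  ∃ (a : Fin n → ℝ) (r : ℝ), 0 < r ∧ Q = Set.Icc a (fun i => a i + r)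

/-- The normalized Luxemburg norm of `exp L(Q)`:
`‖f‖_{exp L(Q)} = inf{α > 0 : (1/|Q|) ∫_Q (e^{|f|/α} - 1) ≤ 1}`. -/
def expLNorm {n : ℕ} (Q : Set (Fin n → ℝ)) (f : (Fin n → ℝ) → ℝ) : ℝ :=
  sInf {a : ℝ | 0 < a ∧
    ∫⁻ x in Q, ENNReal.ofReal (Real.exp (|f x| / a) - 1) ≤ volume Q}

/-- If every `f` with `‖f‖_{exp L(Q)} ≤ 1` satisfies `‖f‖_{X_Q} ≤ C` (for all cubes `Q`),
then for every `γ ∈ (0,1)` there is `C'_γ` (depending only on `γ`) such that for every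
cube `Q` and nested `Ω_k ⊂ Q` with `|Ω_k| ≤ γ^k |Q|` one has
`‖Σ_k χ_{Ω_k}‖_{X_Q} ≤ C C'_γ`. -/
theorem statement3 :
    ∀ γ : ℝ, γ ∈ Set.Ioo (0 : ℝ) 1 → ∃ C' : ℝ, 0 < C' ∧
      ∀ (n : ℕ) (N : Set (Fin n → ℝ) → ((Fin n → ℝ) → ℝ) → ℝ≥0∞) (C : ℝ≥0∞),
        (∀ Q f g, (∀ x, |f x| ≤ |g x|) → N Q f ≤ N Q g) →
        (∀ Q f (a : ℝ), N Q (fun x => a * f x) = ENNReal.ofReal |a| * N Q f) →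
        (∀ Q, IsCube Q → ∀ f, Measurable f → expLNorm Q f ≤ 1 → N Q f ≤ C) →
        ∀ Q, IsCube Q →
          ∀ Ω : ℕ → Set (Fin n → ℝ), (∀ k, MeasurableSet (Ω k)) → (∀ k, Ω k ⊆ Q) →
            (∀ k, Ω (k + 1) ⊆ Ω k) →
            (∀ k, volume (Ω k) ≤ ENNReal.ofReal (γ ^ k) * volume Q) →
            N Q (fun x => ∑' k, (Ω k).indicator (fun _ => (1 : ℝ)) x)
              ≤ C * ENNReal.ofReal C' := by
  classical
  rintro γ ⟨hγ0, hγ1⟩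
  -- the constants
  have hloginv : 0 < Real.log γ⁻¹ := Real.log_pos (one_lt_inv_iff₀.2 ⟨hγ0, hγ1⟩)
  set c : ℝ := 2 / Real.log γ⁻¹ with hc_def
  have hc : 0 < c := by positivity
  set a : ℝ := Real.exp (1 / c) with ha_def
  have ha1 : 1 ≤ a := Real.one_le_exp (by positivity)
  have ha0 : 0 < a := lt_of_lt_of_le one_pos ha1
  set r : ℝ := a * γ with hr_def
  have hr0 : 0 ≤ r := by positivity
  have hr1 : r < 1 := by
    have h1c : 1 / c = Real.log γ⁻¹ / 2 := by
      rw [hc_def]; field_simp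
    have : a < γ⁻¹ := by
      rw [ha_def, h1c]
      calc Real.exp (Real.log γ⁻¹ / 2) < Real.exp (Real.log γ⁻¹) :=
            Real.exp_lt_exp.2 (by linarith)
        _ = γ⁻¹ := Real.exp_log (by positivity)
    calc r = a * γ := rfl
      _ < γ⁻¹ * γ := by exact mul_lt_mul_of_pos_right this hγ0
      _ = 1 := inv_mul_cancel₀ (ne_of_gt hγ0)
  set K₀ : ℝ := a / (1 - r) with hK0_def
  set K : ℕ := max 1 ⌈K₀⌉₊ with hK_def
  have hK1 : 1 ≤ K := le_max_left _ _
  have hKpos : (0 : ℝ) < K := by exact_mod_cast hK1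
  have hK0K : K₀ ≤ K := by
    calc K₀ ≤ (⌈K₀⌉₊ : ℝ) := Nat.le_ceil _
      _ ≤ (K : ℝ) := by exact_mod_cast Nat.le_max_right 1 ⌈K₀⌉₊
  have hCK : (0 : ℝ) < c * K := by positivity
  refine ⟨c * K, hCK, ?_⟩
  intro n N C hmono hhom hexp Q hQ Ω hΩm hΩQ hnest hmeas
  have hant : ∀ j k : ℕ, j ≤ k → Ω k ⊆ Ω j := fun j k h =>
    antitone_nat_of_succ_le (f := Ω) (fun m => hnest m) h
  set φ : (Fin n → ℝ) → ℝ := fun x => ∑' k, (Ω k).indicator (fun _ => (1 : ℝ)) x with hφ_def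
  set ψ : (Fin n → ℝ) → ℝ := fun x =>
    (∑' k, (Ω k).indicator (fun _ => (1 : ℝ≥0∞)) x).toReal with hψ_def
  have hφnn : ∀ x, 0 ≤ φ x := fun x =>
    tsum_nonneg fun k => Set.indicator_nonneg (fun _ _ => zero_le_one) x
  -- key pointwise facts
  have key : ∀ x, φ x = ψ x ∧
      ENNReal.ofReal (Real.exp (φ x / c) - 1) ≤
        ∑' j : ℕ, (Ω j).indicator
          (fun _ => ENNReal.ofReal (Real.exp ((j + 1 : ℕ) / c) - Real.exp ((j : ℕ) / c))) x := by
    intro x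
    by_cases hx : ∀ k, x ∈ Ω k
    · have hφ0 : φ x = 0 := by
        have h1 : (fun k : ℕ => (Ω k).indicator (fun _ => (1 : ℝ)) x) = fun _ => (1 : ℝ) :=
          funext fun k => Set.indicator_of_mem (hx k) _
        rw [hφ_def]
        simp only [h1]
        exact tsum_eq_zero_of_not_summable (by simp [summable_const_iff])
      have hψ0 : ψ x = 0 := by
        have h1 : (fun k : ℕ => (Ω k).indicator (fun _ => (1 : ℝ≥0∞)) x) = fun _ => (1 : ℝ≥0∞) :=
          funext fun k => Set.indicator_of_mem (hx k) _
        rw [hψ_def]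
        simp only [h1]
        rw [ENNReal.tsum_const_eq_top_of_ne_zero one_ne_zero]
        simp
      refine ⟨by rw [hφ0, hψ0], ?_⟩
      rw [hφ0]
      simp
    · push_neg at hx
      set m : ℕ := Nat.find hx with hm_def
      have hmem : ∀ k, x ∈ Ω k ↔ k < m := by
        intro k
        constructor
        · intro h
          by_contra hk
          push_neg at hk
          exact Nat.find_spec hx (hant m k hk h)
        · intro h
          by_contra h'
          exact Nat.find_min hx h h'
      have hvanish : ∀ k ∉ Finset.range m, (Ω k).indicator (fun _ => (1 : ℝ)) x = 0 := by
        intro k hk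
        rw [Finset.mem_range] at hk
        exact Set.indicator_of_notMem (fun h => hk ((hmem k).1 h)) _
      have hφm : φ x = m := by
        rw [hφ_def]
        simp only
        rw [tsum_eq_sum hvanish]
        rw [Finset.sum_congr rfl (fun k hk => Set.indicator_of_mem
          ((hmem k).2 (Finset.mem_range.1 hk)) _)]
        simp
      have hψm : ψ x = m := by
        have hvanish' : ∀ k ∉ Finset.range m, (Ω k).indicator (fun _ => (1 : ℝ≥0∞)) x = 0 := by
          intro k hk
          rw [Finset.mem_range] at hk
          exact Set.indicator_of_notMem (fun h => hk ((hmem k).1 h)) _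
        rw [hψ_def]
        simp only
        rw [tsum_eq_sum hvanish']
        rw [Finset.sum_congr rfl (fun k hk => Set.indicator_of_mem
          ((hmem k).2 (Finset.mem_range.1 hk)) _)]
        simp
      refine ⟨by rw [hφm, hψm], ?_⟩
      have htel : Real.exp (φ x / c) - 1 =
          ∑ j ∈ Finset.range m, (Real.exp ((j + 1 : ℕ) / c) - Real.exp ((j : ℕ) / c)) := by
        rw [hφm, Finset.sum_range_sub (fun j : ℕ => Real.exp ((j : ℕ) / c)) m]
        simp
      have hnonneg : ∀ j ∈ Finset.range m,
          0 ≤ Real.exp ((j + 1 : ℕ) / c) - Real.exp ((j : ℕ) / c) := by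
        intro j _
        simp only [sub_nonneg]
        apply Real.exp_le_exp.2
        gcongr
        push_cast
        linarith
      calc ENNReal.ofReal (Real.exp (φ x / c) - 1)
          = ∑ j ∈ Finset.range m,
              ENNReal.ofReal (Real.exp ((j + 1 : ℕ) / c) - Real.exp ((j : ℕ) / c)) := by
            rw [htel, ENNReal.ofReal_sum_of_nonneg hnonneg]
        _ = ∑ j ∈ Finset.range m, (Ω j).indicator
              (fun _ => ENNReal.ofReal (Real.exp ((j + 1 : ℕ) / c) - Real.exp ((j : ℕ) / c))) x := by
            refine Finset.sum_congr rfl fun j hj => ?_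
            rw [Set.indicator_of_mem ((hmem j).2 (Finset.mem_range.1 hj)) _]
        _ ≤ _ := ENNReal.sum_le_tsum _
  -- measurability of φ
  have hφmeas : Measurable φ := by
    have hEq : φ = ψ := funext fun x => (key x).1
    rw [hEq, hψ_def]
    exact (Measurable.ennreal_tsum fun k =>
      measurable_const.indicator (hΩm k)).ennreal_toReal
  -- the integral estimate
  have hInt : ∫⁻ x in Q, ENNReal.ofReal (Real.exp (φ x / c) - 1) ≤
      ENNReal.ofReal K₀ * volume Q := by
    have hsummable : Summable (fun j : ℕ => a * r ^ j) :=
      (summable_geometric_of_lt_one hr0 hr1).mul_left a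
    calc ∫⁻ x in Q, ENNReal.ofReal (Real.exp (φ x / c) - 1)
        ≤ ∫⁻ x in Q, ∑' j : ℕ, (Ω j).indicator
            (fun _ => ENNReal.ofReal (Real.exp ((j + 1 : ℕ) / c) - Real.exp ((j : ℕ) / c))) x :=
          lintegral_mono fun x => (key x).2
      _ = ∑' j : ℕ, ∫⁻ x in Q, (Ω j).indicator
            (fun _ => ENNReal.ofReal (Real.exp ((j + 1 : ℕ) / c) - Real.exp ((j : ℕ) / c))) x :=
          lintegral_tsum fun j => (measurable_const.indicator (hΩm j)).aemeasurable
      _ = ∑' j : ℕ, ENNReal.ofReal (Real.exp ((j + 1 : ℕ) / c) - Real.exp ((j : ℕ) / c))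
            * volume (Ω j) := by
          refine tsum_congr fun j => ?_
          rw [lintegral_indicator (hΩm j), setLIntegral_const,
            Measure.restrict_apply (hΩm j), Set.inter_eq_self_of_subset_left (hΩQ j)]
      _ ≤ ∑' j : ℕ, ENNReal.ofReal (a * r ^ j) * volume Q := by
          refine ENNReal.tsum_le_tsum fun j => ?_
          have h1 : Real.exp ((j + 1 : ℕ) / c) - Real.exp ((j : ℕ) / c)
              ≤ Real.exp ((j + 1 : ℕ) / c) := by
            have := Real.exp_pos ((j : ℝ) / c)
            push_cast
            push_cast at this
            linarith
          have h2 : Real.exp ((j + 1 : ℕ) / c) * γ ^ j = a * r ^ j := by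
            have hj : ((j + 1 : ℕ) : ℝ) / c = 1 / c + (j : ℕ) * (1 / c) := by
              push_cast; field_simp; ring
            rw [hj, Real.exp_add, Real.exp_nat_mul, ha_def]
            rw [hr_def, mul_pow]
            ring
          calc ENNReal.ofReal (Real.exp ((j + 1 : ℕ) / c) - Real.exp ((j : ℕ) / c))
              * volume (Ω j)
              ≤ ENNReal.ofReal (Real.exp ((j + 1 : ℕ) / c))
                * (ENNReal.ofReal (γ ^ j) * volume Q) :=
                mul_le_mul (ENNReal.ofReal_le_ofReal h1) (hmeas j) zero_le zero_le
            _ = ENNReal.ofReal (a * r ^ j) * volume Q := by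
                rw [← mul_assoc, ← ENNReal.ofReal_mul (Real.exp_nonneg _), h2]
      _ = (∑' j : ℕ, ENNReal.ofReal (a * r ^ j)) * volume Q := ENNReal.tsum_mul_right
      _ = ENNReal.ofReal K₀ * volume Q := by
          rw [← ENNReal.ofReal_tsum_of_nonneg (fun j => by positivity) hsummable]
          congr 1
          rw [tsum_mul_left, tsum_geometric_of_lt_one hr0 hr1, hK0_def, div_eq_mul_inv]
  -- Bernoulli-type inequality
  have bern : ∀ t : ℝ, 0 ≤ t →
      Real.exp (t / (c * K)) - 1 ≤ (Real.exp (t / c) - 1) / K := by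
    intro t ht
    set s : ℝ := t / (c * K) with hs_def
    have hs : 0 ≤ s := by positivity
    have hts : t / c = (K : ℝ) * s := by
      rw [hs_def]; field_simp
    have hexp1 : 1 ≤ Real.exp s := Real.one_le_exp hs
    have hber : 1 + (K : ℝ) * (Real.exp s - 1) ≤ (Real.exp s) ^ K := by
      have := one_add_mul_le_pow (a := Real.exp s - 1) (by linarith) K
      calc 1 + (K : ℝ) * (Real.exp s - 1) ≤ (1 + (Real.exp s - 1)) ^ K := this
        _ = (Real.exp s) ^ K := by ring_nf
    rw [hts, Real.exp_nat_mul]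
    rw [le_div_iff₀ hKpos]
    nlinarith [hber]
  -- membership in the Luxemburg set
  set g : (Fin n → ℝ) → ℝ := fun x => (c * K : ℝ)⁻¹ * φ x with hg_def
  have hgmeas : Measurable g := hφmeas.const_mul _
  have hfmeas : Measurable (fun x => ENNReal.ofReal (Real.exp (φ x / c) - 1)) :=
    ((hφmeas.div_const c).exp.sub measurable_const).ennreal_ofReal
  have hgLux : expLNorm Q g ≤ 1 := by
    apply csInf_le
    · exact ⟨0, fun b hb => le_of_lt hb.1⟩
    refine ⟨one_pos, ?_⟩
    have habs : ∀ x, |g x| / 1 = φ x / (c * K) := by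
      intro x
      rw [hg_def]
      simp only
      rw [div_one, abs_of_nonneg (mul_nonneg (by positivity) (hφnn x)), inv_mul_eq_div]
    have hpt : ∀ x, ENNReal.ofReal (Real.exp (|g x| / 1) - 1) ≤
        ENNReal.ofReal (Real.exp (φ x / c) - 1) / ENNReal.ofReal (K : ℝ) := by
      intro x
      rw [habs x]
      calc ENNReal.ofReal (Real.exp (φ x / (c * K)) - 1)
          ≤ ENNReal.ofReal ((Real.exp (φ x / c) - 1) / (K : ℝ)) :=
            ENNReal.ofReal_le_ofReal (bern _ (hφnn x))
        _ = ENNReal.ofReal (Real.exp (φ x / c) - 1) / ENNReal.ofReal (K : ℝ) :=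
            ENNReal.ofReal_div_of_pos hKpos
    calc ∫⁻ x in Q, ENNReal.ofReal (Real.exp (|g x| / 1) - 1)
        ≤ ∫⁻ x in Q, ENNReal.ofReal (Real.exp (φ x / c) - 1) / ENNReal.ofReal (K : ℝ) :=
          lintegral_mono hpt
      _ = (∫⁻ x in Q, ENNReal.ofReal (Real.exp (φ x / c) - 1)) / ENNReal.ofReal (K : ℝ) := by
          simp only [div_eq_mul_inv]
          exact lintegral_mul_const'' _ hfmeas.aemeasurable
      _ ≤ (ENNReal.ofReal K₀ * volume Q) / ENNReal.ofReal (K : ℝ) :=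
          ENNReal.div_le_div_right hInt _
      _ ≤ volume Q := by
          rw [ENNReal.div_le_iff (ENNReal.ofReal_pos.2 hKpos).ne' ENNReal.ofReal_ne_top]
          calc ENNReal.ofReal K₀ * volume Q
              ≤ ENNReal.ofReal (K : ℝ) * volume Q :=
                mul_le_mul_left (ENNReal.ofReal_le_ofReal hK0K) _
            _ = volume Q * ENNReal.ofReal (K : ℝ) := mul_comm _ _
  have hNg : N Q g ≤ C := hexp Q hQ g hgmeas hgLux
  have hrw : (fun x => (c * K : ℝ) * g x) = φ := funext fun x => by
    rw [hg_def]
    exact mul_inv_cancel_left₀ (ne_of_gt hCK) _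
  have hhomφ : N Q φ = ENNReal.ofReal |(c * K : ℝ)| * N Q g := by
    rw [← hrw]
    exact hhom Q g (c * K)
  calc N Q φ = ENNReal.ofReal |(c * K : ℝ)| * N Q g := hhomφ
    _ ≤ ENNReal.ofReal |(c * K : ℝ)| * C := mul_le_mul_right hNg _
    _ = C * ENNReal.ofReal (c * K) := by rw [abs_of_pos hCK, mul_comm]
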